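/- arXiv:2003.02687 — 2 statements merged into one kernel-verified Lean document; each statement's English description precedes it below -/
import Mathlib

section
/- For each integer n ≥ 1, let G* be the graph on 5n vertices {u_i, v_i, x_i, y_i, z_i : 1 ≤ i ≤ n} whose edges are, for each i, the edges u_i v_i, u_i x_i, u_i y_i, v_i x_i, v_i y_i, x_i z_i, y_i z_i (a copy of K₄ on u_i, v_i, x_i, y_i with the edge x_i y_i subdivided by z_i), together with the edges z_i u_{i+1} for 1 ≤ i ≤ n − 1. Then χ_DP(G*) = 3 and α₂^{DP}(G*) = 3n; in particular, α₂^{DP}(G*) = 3n < 2·|V(G*)|/χ_DP(G*) = 10n/3, so G* is not partially DP-nice. -/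
open SimpleGraph

/-- `DPCover G H L` means `(L, H)` is a cover of the graph `G`:
(1) the sets `L u` partition `V(H)`; (2) each `H[L u]` is complete;
(3) for each edge `uv` of `G`, the edges of `H` between `L u` and `L v` form a matching;
(4) there are no edges of `H` between lists of distinct non-adjacent vertices. -/
structure DPCover {V : Type} (G : SimpleGraph V) {W : Type} (H : SimpleGraph W)
    (L : V → Finset W) : Prop where
  partition : ∀ w : W, ∃! v : V, w ∈ L v
  cliques : ∀ v : V, ∀ a ∈ L v, ∀ b ∈ L v, a ≠ b → H.Adj a b
  matching : ∀ ⦃u v : V⦄, G.Adj u v → ∀ a ∈ L u, ∀ b ∈ L v, ∀ b' ∈ L v,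
      H.Adj a b → H.Adj a b' → b = b'
  nonadj : ∀ ⦃u v : V⦄, u ≠ v → ¬ G.Adj u v → ∀ a ∈ L u, ∀ b ∈ L v, ¬ H.Adj a b

/-- A finset is independent in `H` if no two of its elements are adjacent. -/
def IsIndepFinset {W : Type} (H : SimpleGraph W) (S : Finset W) : Prop :=
  ∀ a ∈ S, ∀ b ∈ S, ¬ H.Adj a b

/-- The independence number of `H`. -/
noncomputable def indepNum {W : Type} [Fintype W] (H : SimpleGraph W) : ℕ :=
  sSup {n : ℕ | ∃ S : Finset W, IsIndepFinset H S ∧ S.card = n}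

/-- The DP-chromatic number of `G`: the least `m` such that every `m`-fold cover `(L, H)`
of `G` admits an `H`-coloring, i.e. an independent set in `H` of size `|V(G)|`. -/
noncomputable def chiDP {V : Type} [Fintype V] (G : SimpleGraph V) : ℕ :=
  sInf {m : ℕ | ∀ (W : Type) (_ : Fintype W) (H : SimpleGraph W) (L : V → Finset W),
    DPCover G H L → (∀ v, (L v).card = m) →
    ∃ S : Finset W, IsIndepFinset H S ∧ S.card = Fintype.card V}

/-- The partial DP `t`-chromatic number of `G`: the minimum of the independence number
`α(H)` over all `t`-fold covers `(L, H)` of `G`. -/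
noncomputable def alphaDP {V : Type} [Fintype V] (G : SimpleGraph V) (t : ℕ) : ℕ :=
  sInf {n : ℕ | ∃ (W : Type) (_ : Fintype W) (H : SimpleGraph W) (L : V → Finset W),
    DPCover G H L ∧ (∀ v, (L v).card = t) ∧ _root_.indepNum H = n}

/-- A graph `G` is partially DP-nice if `α_t^{DP}(G) ≥ t|V(G)|/χ_DP(G)` for all
`t ∈ {1, …, χ_DP(G)}`. -/
def PartiallyDPNice {V : Type} [Fintype V] (G : SimpleGraph V) : Prop :=
  ∀ t : ℕ, 1 ≤ t → t ≤ chiDP G →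
    (t * Fintype.card V : ℚ) / (chiDP G : ℚ) ≤ (alphaDP G t : ℚ)

/-- The edges of the gadget graph on five vertices `0 = u, 1 = v, 2 = x, 3 = y, 4 = z`:
a copy of `K₄` on `u, v, x, y` with the edge `xy` subdivided by `z`, i.e. the edges
`uv, ux, uy, vx, vy, xz, yz`. -/
def gadgetEdges : Finset (Sym2 (Fin 5)) :=
  {s(0, 1), s(0, 2), s(0, 3), s(1, 2), s(1, 3), s(2, 4), s(3, 4)}

/-- The graph `G*` on `5n` vertices: `n` disjoint copies of the gadget (copy `i` on the
vertices `(i, 0), …, (i, 4)`), together with the linking edges `z_i u_{i+1}`. -/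
def chainGadgetGraph (n : ℕ) : SimpleGraph (Fin n × Fin 5) where
  Adj p q := (p.1 = q.1 ∧ s(p.2, q.2) ∈ gadgetEdges) ∨
    ((q.1 : ℕ) = (p.1 : ℕ) + 1 ∧ p.2 = 4 ∧ q.2 = 0) ∨
    ((p.1 : ℕ) = (q.1 : ℕ) + 1 ∧ p.2 = 0 ∧ q.2 = 4)
  symm := by
    refine ⟨?_⟩
    rintro p q (⟨h1, h2⟩ | ⟨h1, h2, h3⟩ | ⟨h1, h2, h3⟩)
    · exact Or.inl ⟨h1.symm, by rwa [Sym2.eq_swap]⟩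
    · exact Or.inr (Or.inr ⟨h1, h3, h2⟩)
    · exact Or.inr (Or.inl ⟨h1, h3, h2⟩)
  loopless := by
    have hgadget : ∀ a : Fin 5, s(a, a) ∉ gadgetEdges := by decide
    refine ⟨?_⟩
    rintro p (⟨_, h2⟩ | ⟨h1, _, _⟩ | ⟨h1, _, _⟩)
    · exact hgadget p.2 h2
    · omega
    · omega


section Lemmas

lemma mem_L_unique {V W : Type} {G : SimpleGraph V} {H : SimpleGraph W} {L : V → Finset W}
    (cov : DPCover G H L) {u v : V} {w : W} (hu : w ∈ L u) (hv : w ∈ L v) : u = v := by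
  obtain ⟨x, _, hx⟩ := cov.partition w
  exact (hx u hu).trans (hx v hv).symm

lemma exists_nonadj {V W : Type} {G : SimpleGraph V} {H : SimpleGraph W} {L : V → Finset W}
    (cov : DPCover G H L) {u v : V} (huv : G.Adj u v) {a : W} (ha : a ∈ L u)
    (hv : 2 ≤ (L v).card) : ∃ b ∈ L v, ¬ H.Adj a b := by
  classical
  by_contra hcon
  push_neg at hcon
  obtain ⟨b, hb⟩ := Finset.card_pos.mp (Nat.lt_of_lt_of_le Nat.zero_lt_two hv)
  have hsub : L v ⊆ {b} := fun b' hb' => Finset.mem_singleton.mpr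
    (cov.matching huv a ha b' hb' b hb (hcon b' hb') (hcon b hb))
  have := Finset.card_le_card hsub
  simp only [Finset.card_singleton] at this
  omega

lemma greedy {V W : Type} [Fintype V] {G : SimpleGraph V} {H : SimpleGraph W} {L : V → Finset W}
    (cov : DPCover G H L) (hL : ∀ v, (L v).card = 3) (idx : V → ℕ)
    (hinj : Function.Injective idx)
    (hdeg : ∀ v, ∃ u₁ u₂ : V, ∀ u, G.Adj u v → idx u < idx v → u = u₁ ∨ u = u₂) :
    ∃ S : Finset W, IsIndepFinset H S ∧ S.card = Fintype.card V := by
  classical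
  suffices h : ∀ s : Finset V, ∃ f : V → W, (∀ v, f v ∈ L v) ∧
      ∀ u ∈ s, ∀ v ∈ s, G.Adj u v → ¬ H.Adj (f u) (f v) by
    obtain ⟨f, hf1, hf2⟩ := h Finset.univ
    have hfi : Function.Injective f := fun u v huv =>
      mem_L_unique cov (hf1 u) (huv ▸ hf1 v)
    refine ⟨Finset.univ.image f, ?_, by
      rw [Finset.card_image_of_injective _ hfi, Finset.card_univ]⟩
    intro a ha b hb
    simp only [Finset.mem_image] at ha hb
    obtain ⟨u, _, rfl⟩ := ha; obtain ⟨v, _, rfl⟩ := hb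
    by_cases huv : u = v
    · subst huv; exact fun h => H.loopless.irrefl _ h
    · by_cases hadj : G.Adj u v
      · exact hf2 u (Finset.mem_univ u) v (Finset.mem_univ v) hadj
      · exact cov.nonadj huv hadj _ (hf1 u) _ (hf1 v)
  intro s
  induction s using Finset.strongInduction with
  | _ s ih =>
    rcases s.eq_empty_or_nonempty with rfl | hs
    · have hne : ∀ v : V, ∃ w, w ∈ L v := fun v =>
        Finset.card_pos.mp (by rw [hL v]; omega)
      exact ⟨fun v => (hne v).choose, fun v => (hne v).choose_spec, by simp⟩
    · obtain ⟨v, hv, hmax⟩ := s.exists_max_image idx hs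
      obtain ⟨f, hf1, hf2⟩ := ih (s.erase v) (Finset.erase_ssubset hv)
      obtain ⟨u₁, u₂, hu⟩ := hdeg v
      set A : V → Finset W := fun u => (L v).filter (fun w => G.Adj u v ∧ H.Adj (f u) w)
        with hA
      have hAcard : ∀ u, (A u).card ≤ 1 := by
        intro u
        refine Finset.card_le_one.mpr ?_
        intro w hw w' hw'
        obtain hw := Finset.mem_filter.mp hw
        obtain hw' := Finset.mem_filter.mp hw'
        exact cov.matching hw.2.1 (f u) (hf1 u) w hw.1 w' hw'.1 hw.2.2 hw'.2.2
      have hF : ∃ w ∈ L v, w ∉ A u₁ ∪ A u₂ := by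
        by_contra hcon; push_neg at hcon
        have hsub : L v ⊆ A u₁ ∪ A u₂ := hcon
        have h1 := Finset.card_le_card hsub
        have h2 := Finset.card_union_le (A u₁) (A u₂)
        have h3 := hAcard u₁; have h4 := hAcard u₂
        rw [hL v] at h1; omega
      obtain ⟨w, hwL, hwF⟩ := hF
      have earlier : ∀ y ∈ s, y ≠ v → G.Adj y v → ¬ H.Adj (f y) w := by
        intro y hy hyv hadjG hadjH
        have hyi : idx y < idx v := lt_of_le_of_ne (hmax y hy) (fun h => hyv (hinj h))
        have hmemA : w ∈ A y := Finset.mem_filter.mpr ⟨hwL, hadjG, hadjH⟩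
        rcases hu y hadjG hyi with rfl | rfl
        · exact hwF (Finset.mem_union_left _ hmemA)
        · exact hwF (Finset.mem_union_right _ hmemA)
      refine ⟨Function.update f v w, ?_, ?_⟩
      · intro x; rcases eq_or_ne x v with rfl | hx
        · rw [Function.update_self]; exact hwL
        · rw [Function.update_of_ne hx]; exact hf1 x
      · intro x hx y hy hxy
        by_cases hxv : x = v
        · by_cases hyv : y = v
          · subst hxv; subst hyv; exact absurd hxy (G.loopless.irrefl _)
          · subst hxv
            rw [Function.update_self, Function.update_of_ne hyv]
            intro hadj
            exact earlier y hy hyv hxy.symm hadj.symm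
        · by_cases hyv : y = v
          · subst hyv
            rw [Function.update_self, Function.update_of_ne hxv]
            exact earlier x hx hxv hxy
          · rw [Function.update_of_ne hxv, Function.update_of_ne hyv]
            exact hf2 x (Finset.mem_erase.mpr ⟨hxv, hx⟩) y (Finset.mem_erase.mpr ⟨hyv, hy⟩) hxy

/-- canonical m-fold cover -/
def canonH {V : Type} (G : SimpleGraph V) (m : ℕ) : SimpleGraph (V × Fin m) where
  Adj p q := (p.1 = q.1 ∧ p.2 ≠ q.2) ∨ (G.Adj p.1 q.1 ∧ p.2 = q.2)
  symm := by
    refine ⟨?_⟩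
    rintro p q (⟨h1, h2⟩ | ⟨h1, h2⟩)
    · exact Or.inl ⟨h1.symm, h2.symm⟩
    · exact Or.inr ⟨h1.symm, h2.symm⟩
  loopless := by
    refine ⟨?_⟩
    rintro p (⟨_, h⟩ | ⟨h, _⟩)
    · exact h rfl
    · exact G.loopless.irrefl _ h

def canonL {V : Type} (G : SimpleGraph V) (m : ℕ) : V → Finset (V × Fin m) :=
  fun v => Finset.univ.map ⟨fun c => (v, c), fun a b h => (Prod.mk.injEq .. ▸ h).2⟩

lemma canonL_mem {V : Type} {G : SimpleGraph V} {m : ℕ} {v : V} {w : V × Fin m} :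
    w ∈ canonL G m v ↔ w.1 = v := by
  constructor
  · intro h
    simp only [canonL, Finset.mem_map, Function.Embedding.coeFn_mk] at h
    obtain ⟨c, _, rfl⟩ := h; rfl
  · intro h
    simp only [canonL, Finset.mem_map, Function.Embedding.coeFn_mk]
    exact ⟨w.2, Finset.mem_univ _, by rw [← h]; rfl⟩

lemma canon_cover {V : Type} (G : SimpleGraph V) (m : ℕ) :
    DPCover G (canonH G m) (canonL G m) := by
  constructor
  · intro w
    exact ⟨w.1, canonL_mem.mpr rfl, fun v hv => (canonL_mem.mp hv).symm⟩
  · intro v a ha b hb hab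
    rw [canonL_mem] at ha hb
    exact Or.inl ⟨ha.trans hb.symm, fun h => hab (Prod.ext (ha.trans hb.symm) h)⟩
  · intro u v huv a ha b hb b' hb' h1 h2
    rw [canonL_mem] at ha hb hb'
    have hne : a.1 ≠ b.1 := by rw [ha, hb]; exact huv.ne
    have hne' : a.1 ≠ b'.1 := by rw [ha, hb']; exact huv.ne
    rcases h1 with ⟨h, _⟩ | ⟨_, h⟩
    · exact absurd h hne
    rcases h2 with ⟨h', _⟩ | ⟨_, h'⟩
    · exact absurd h' hne'
    exact Prod.ext (hb.trans hb'.symm) (h ▸ h')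
  · intro u v huv hnadj a ha b hb h
    rw [canonL_mem] at ha hb
    rcases h with ⟨h, _⟩ | ⟨h, _⟩
    · exact huv (ha ▸ hb ▸ h)
    · exact hnadj (ha ▸ hb ▸ h)

lemma canonL_card {V : Type} (G : SimpleGraph V) (m : ℕ) (v : V) :
    (canonL G m v).card = m := by
  simp [canonL]

lemma triangle_lb {V : Type} [Fintype V] (G : SimpleGraph V) (m : ℕ)
    {t0 t1 t2 : V} (h01 : G.Adj t0 t1) (h02 : G.Adj t0 t2) (h12 : G.Adj t1 t2)
    (hS : ∃ S : Finset (V × Fin m), IsIndepFinset (canonH G m) S ∧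
      S.card = Fintype.card V) : 3 ≤ m := by
  classical
  obtain ⟨S, hind, hcard⟩ := hS
  have hinjOn : Set.InjOn Prod.fst (S : Set (V × Fin m)) := by
    intro p hp q hq hpq
    by_contra hne
    have hsnd : p.2 ≠ q.2 := fun h => hne (Prod.ext hpq h)
    exact hind p hp q hq (Or.inl ⟨hpq, hsnd⟩)
  have himg : (S.image Prod.fst) = Finset.univ := by
    apply Finset.eq_univ_of_card
    rw [Finset.card_image_of_injOn hinjOn, hcard]
  have hsurj : ∀ v : V, ∃ c : Fin m, (v, c) ∈ S := by
    intro v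
    have : v ∈ S.image Prod.fst := himg ▸ Finset.mem_univ v
    obtain ⟨p, hp, hpe⟩ := Finset.mem_image.mp this
    exact ⟨p.2, by rwa [← hpe, Prod.mk.eta]⟩
  choose col hcol using hsurj
  have hproper : ∀ u v : V, G.Adj u v → col u ≠ col v := by
    intro u v huv h
    exact hind _ (hcol u) _ (hcol v) (Or.inr ⟨huv, h⟩)
  have hc : ({col t0, col t1, col t2} : Finset (Fin m)).card = 3 := by
    rw [Finset.card_insert_of_notMem (by
        simp only [Finset.mem_insert, Finset.mem_singleton]
        push_neg
        exact ⟨hproper _ _ h01, hproper _ _ h02⟩),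
      Finset.card_insert_of_notMem (by
        simp only [Finset.mem_singleton]
        exact hproper _ _ h12),
      Finset.card_singleton]
  calc 3 = ({col t0, col t1, col t2} : Finset (Fin m)).card := hc.symm
    _ ≤ (Finset.univ : Finset (Fin m)).card := Finset.card_le_univ _
    _ = m := by simp

/-- the gadget cover relation -/
def gR : Fin 5 × Fin 2 → Fin 5 × Fin 2 → Prop := fun p q =>
  (p.1 = q.1 ∧ p.2 ≠ q.2) ∨
  (s(p.1, q.1) ∈ ({s(0,1), s(0,2), s(0,3), s(1,2), s(1,3), s(2,4)} :
      Finset (Sym2 (Fin 5))) ∧ p.2 = q.2) ∨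
  (s(p.1, q.1) = s((3:Fin 5), 4) ∧ p.2 ≠ q.2)

instance (p q : Fin 5 × Fin 2) : Decidable (gR p q) := by unfold gR; infer_instance

lemma gR_symm : ∀ p q, gR p q → gR q p := by decide
lemma gR_irrefl : ∀ p, ¬ gR p p := by decide

def exH (n : ℕ) : SimpleGraph (Fin n × (Fin 5 × Fin 2)) where
  Adj w w' := w.1 = w'.1 ∧ gR w.2 w'.2
  symm := ⟨fun _ _ ⟨h1, h2⟩ => ⟨h1.symm, gR_symm _ _ h2⟩⟩
  loopless := ⟨fun _ ⟨_, h⟩ => gR_irrefl _ h⟩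

def exL (n : ℕ) : Fin n × Fin 5 → Finset (Fin n × (Fin 5 × Fin 2)) :=
  fun v => {(v.1, (v.2, 0)), (v.1, (v.2, 1))}

lemma exL_mem {n : ℕ} {v : Fin n × Fin 5} {w : Fin n × (Fin 5 × Fin 2)} :
    w ∈ exL n v ↔ w.1 = v.1 ∧ w.2.1 = v.2 := by
  constructor
  · intro h
    simp only [exL, Finset.mem_insert, Finset.mem_singleton] at h
    rcases h with rfl | rfl <;> exact ⟨rfl, rfl⟩
  · rintro ⟨h1, h2⟩
    simp only [exL, Finset.mem_insert, Finset.mem_singleton]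
    obtain ⟨i, j, c⟩ := w
    simp only at h1 h2
    subst h1; subst h2
    fin_cases c
    · exact Or.inl rfl
    · exact Or.inr rfl

lemma exL_card {n : ℕ} (v : Fin n × Fin 5) : (exL n v).card = 2 := by
  rw [exL, Finset.card_insert_of_notMem (by simp), Finset.card_singleton]

lemma ex_cover (n : ℕ) : DPCover (chainGadgetGraph n) (exH n) (exL n) := by
  constructor
  · intro w
    refine ⟨(w.1, w.2.1), exL_mem.mpr ⟨rfl, rfl⟩, ?_⟩
    rintro ⟨i, j⟩ hv
    rw [exL_mem] at hv
    simp only at hv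
    rw [hv.1, hv.2]
  · intro v a ha b hb hab
    rw [exL_mem] at ha hb
    refine ⟨ha.1.trans hb.1.symm, ?_⟩
    have h2 : a.2.2 ≠ b.2.2 := by
      intro h
      exact hab (Prod.ext (ha.1.trans hb.1.symm)
        (Prod.ext (ha.2.trans hb.2.symm) h))
    exact Or.inl ⟨ha.2.trans hb.2.symm, h2⟩
  · intro u v huv a ha b hb b' hb' h1 h2
    rw [exL_mem] at ha hb hb'
    obtain ⟨hi1, hgR1⟩ := h1
    obtain ⟨hi2, hgR2⟩ := h2
    have hsame : u.1 = v.1 := by rw [← ha.1, ← hb.1]; exact hi1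
    have hedge : s(u.2, v.2) ∈ gadgetEdges := by
      rcases huv with ⟨_, h⟩ | ⟨h, _, _⟩ | ⟨h, _, _⟩
      · exact h
      · rw [hsame] at h; omega
      · rw [hsame] at h; omega
    have key : ∀ (j j' : Fin 5), s(j, j') ∈ gadgetEdges → ∀ (c d d' : Fin 2),
        gR (j, c) (j', d) → gR (j, c) (j', d') → d = d' := by decide
    have hd : b.2.2 = b'.2.2 := by
      have e1 := hgR1
      have e2 := hgR2
      rw [show a.2 = (u.2, a.2.2) from Prod.ext ha.2 rfl,
        show b.2 = (v.2, b.2.2) from Prod.ext hb.2 rfl] at e1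
      rw [show a.2 = (u.2, a.2.2) from Prod.ext ha.2 rfl,
        show b'.2 = (v.2, b'.2.2) from Prod.ext hb'.2 rfl] at e2
      exact key u.2 v.2 hedge a.2.2 b.2.2 b'.2.2 e1 e2
    exact Prod.ext (hb.1.trans hb'.1.symm)
      (Prod.ext (hb.2.trans hb'.2.symm) hd)
  · intro u v huv hnadj a ha b hb h
    rw [exL_mem] at ha hb
    obtain ⟨hi, hgR⟩ := h
    have hsame : u.1 = v.1 := by rw [← ha.1, ← hb.1]; exact hi
    have hne2 : u.2 ≠ v.2 := by
      intro h2
      exact huv (Prod.ext hsame h2)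
    have hnedge : s(u.2, v.2) ∉ gadgetEdges := by
      intro hmem
      exact hnadj (Or.inl ⟨hsame, hmem⟩)
    have key : ∀ (j j' : Fin 5), j ≠ j' → s(j, j') ∉ gadgetEdges →
        ∀ (c d : Fin 2), ¬ gR (j, c) (j', d) := by decide
    have e1 := hgR
    rw [show a.2 = (u.2, a.2.2) from Prod.ext ha.2 rfl,
      show b.2 = (v.2, b.2.2) from Prod.ext hb.2 rfl] at e1
    exact key u.2 v.2 hne2 hnedge a.2.2 b.2.2 e1

set_option maxRecDepth 10000 in
lemma gR_no4 : ∀ a b c d : Fin 5 × Fin 2, gR a b ∨ gR a c ∨ gR a d ∨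
    gR b c ∨ gR b d ∨ gR c d ∨
    a = b ∨ a = c ∨ a = d ∨ b = c ∨ b = d ∨ c = d := by decide

lemma gR_indep_le3 : ∀ T : Finset (Fin 5 × Fin 2),
    (∀ a ∈ T, ∀ b ∈ T, ¬ gR a b) → T.card ≤ 3 := by
  intro T hT
  by_contra hcontra
  push_neg at hcontra
  have h4 : 4 ≤ T.card := hcontra
  obtain ⟨a, ha⟩ := Finset.card_pos.mp (show 0 < T.card by omega)
  have h3 : 3 ≤ (T.erase a).card := by
    rw [Finset.card_erase_of_mem ha]; omega
  obtain ⟨b, hb⟩ := Finset.card_pos.mp (show 0 < (T.erase a).card by omega)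
  have h2 : 2 ≤ ((T.erase a).erase b).card := by
    rw [Finset.card_erase_of_mem hb]; omega
  obtain ⟨c, hcm⟩ := Finset.card_pos.mp (show 0 < ((T.erase a).erase b).card by omega)
  have h1 : 1 ≤ (((T.erase a).erase b).erase c).card := by
    rw [Finset.card_erase_of_mem hcm]; omega
  obtain ⟨d, hd⟩ := Finset.card_pos.mp
    (show 0 < (((T.erase a).erase b).erase c).card by omega)
  obtain ⟨hdc, hd'⟩ := Finset.mem_erase.mp hd
  obtain ⟨hdb, hd''⟩ := Finset.mem_erase.mp hd'
  obtain ⟨hda, hdT⟩ := Finset.mem_erase.mp hd''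
  obtain ⟨hcb, hc'⟩ := Finset.mem_erase.mp hcm
  obtain ⟨hca, hcT⟩ := Finset.mem_erase.mp hc'
  obtain ⟨hba, hbT⟩ := Finset.mem_erase.mp hb
  have h5 := gR_no4 a b c d
  have e1 := hT a ha b hbT; have e2 := hT a ha c hcT; have e3 := hT a ha d hdT
  have e4 := hT b hbT c hcT; have e5 := hT b hbT d hdT; have e6 := hT c hcT d hdT
  tauto

def T0 : Finset (Fin 5 × Fin 2) := {(0, 1), (2, 0), (4, 1)}

lemma T0_indep : ∀ a ∈ T0, ∀ b ∈ T0, ¬ gR a b := by decide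
lemma T0_card : T0.card = 3 := by decide

lemma indepNum_ge {W : Type} [Fintype W] (H : SimpleGraph W) {k : ℕ}
    (h1 : ∃ S, IsIndepFinset H S ∧ S.card = k) : k ≤ _root_.indepNum H := by
  obtain ⟨S, hS, hc⟩ := h1
  exact le_csSup ⟨Fintype.card W, fun m ⟨S', _, hc'⟩ =>
    hc' ▸ le_trans (Finset.card_le_univ S') (le_of_eq Finset.card_univ)⟩ ⟨S, hS, hc⟩

lemma indepNum_eq {W : Type} [Fintype W] (H : SimpleGraph W) {k : ℕ}
    (h1 : ∃ S, IsIndepFinset H S ∧ S.card = k)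
    (h2 : ∀ S, IsIndepFinset H S → S.card ≤ k) : _root_.indepNum H = k := by
  refine le_antisymm ?_ (indepNum_ge H h1)
  refine csSup_le ⟨k, h1⟩ ?_
  rintro m ⟨S, hS, rfl⟩
  exact h2 S hS

lemma exH_indep_le {n : ℕ} (S : Finset (Fin n × (Fin 5 × Fin 2)))
    (hS : IsIndepFinset (exH n) S) : S.card ≤ 3 * n := by
  classical
  have hcard := Finset.card_eq_sum_card_fiberwise
    (f := Prod.fst) (s := S) (t := Finset.univ) (fun x _ => Finset.mem_univ _)
  rw [hcard]
  have hfiber : ∀ i : Fin n, (S.filter (fun w => w.1 = i)).card ≤ 3 := by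
    intro i
    have hinj : Set.InjOn Prod.snd ((S.filter (fun w => w.1 = i)) :
        Set (Fin n × (Fin 5 × Fin 2))) := by
      intro p hp q hq hpq
      simp only [Finset.coe_filter, Set.mem_setOf_eq] at hp hq
      exact Prod.ext (hp.2.trans hq.2.symm) hpq
    have himg := Finset.card_image_of_injOn hinj
    rw [← himg]
    apply gR_indep_le3
    intro a ha b hb hab
    obtain ⟨p, hp, rfl⟩ := Finset.mem_image.mp ha
    obtain ⟨q, hq, rfl⟩ := Finset.mem_image.mp hb
    obtain ⟨hpS, hpi⟩ := Finset.mem_filter.mp hp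
    obtain ⟨hqS, hqi⟩ := Finset.mem_filter.mp hq
    exact hS p hpS q hqS ⟨hpi.trans hqi.symm, hab⟩
  calc (∑ i : Fin n, (S.filter (fun w => w.1 = i)).card)
      ≤ ∑ _i : Fin n, 3 := Finset.sum_le_sum (fun i _ => hfiber i)
    _ = 3 * n := by simp [mul_comm]

lemma exH_indep_3n (n : ℕ) : ∃ S : Finset (Fin n × (Fin 5 × Fin 2)),
    IsIndepFinset (exH n) S ∧ S.card = 3 * n := by
  refine ⟨Finset.univ ×ˢ T0, ?_, ?_⟩
  · rintro a ha b hb ⟨h1, h2⟩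
    obtain ⟨_, ha2⟩ := Finset.mem_product.mp ha
    obtain ⟨_, hb2⟩ := Finset.mem_product.mp hb
    exact T0_indep a.2 ha2 b.2 hb2 h2
  · rw [Finset.card_product, Finset.card_univ, Fintype.card_fin, T0_card, mul_comm]

lemma exH_indepNum (n : ℕ) : _root_.indepNum (exH n) = 3 * n :=
  indepNum_eq _ (exH_indep_3n n) (fun S hS => exH_indep_le S hS)

def d1 : Fin 5 → Fin 5 := ![0, 0, 0, 0, 2]
def d2 : Fin 5 → Fin 5 := ![0, 0, 1, 1, 3]

lemma key2 : ∀ j j' : Fin 5, s(j', j) ∈ gadgetEdges → j'.val < j.val →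
    j' = d1 j ∨ j' = d2 j := by decide

def cidx {n : ℕ} (p : Fin n × Fin 5) : ℕ := 5 * p.1.val + p.2.val

lemma cidx_inj {n : ℕ} : Function.Injective (cidx (n := n)) := by
  rintro ⟨i, j⟩ ⟨i', j'⟩ h
  simp only [cidx] at h
  have hj := j.isLt; have hj' := j'.isLt
  have : i.val = i'.val ∧ j.val = j'.val := by omega
  exact Prod.ext (Fin.ext this.1) (Fin.ext this.2)

lemma chain_hdeg {n : ℕ} : ∀ v : Fin n × Fin 5, ∃ u₁ u₂ : Fin n × Fin 5,
    ∀ u, (chainGadgetGraph n).Adj u v → cidx u < cidx v → u = u₁ ∨ u = u₂ := by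
  rintro ⟨i, j⟩
  have hin : i.val - 1 < n := by have := i.isLt; omega
  refine ⟨if j = (0 : Fin 5) then ((⟨i.val - 1, hin⟩ : Fin n), (4 : Fin 5))
    else (i, d1 j), (i, d2 j), ?_⟩
  rintro ⟨i', j'⟩ hadj hidx
  simp only [cidx] at hidx
  rcases hadj with ⟨h1, h2⟩ | ⟨h1, h2, h3⟩ | ⟨h1, h2, h3⟩
  · simp only [] at h1 h2
    subst h1
    have hlt : j'.val < j.val := by omega
    rcases key2 j j' h2 hlt with rfl | rfl
    · left
      have hj0 : j ≠ (0 : Fin 5) := by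
        intro h; subst h; exact absurd hlt (by decide)
      rw [if_neg hj0]
    · right; rfl
  · simp only [] at h1 h2 h3
    subst h2; subst h3
    left
    rw [if_pos rfl]
    have : i'.val = i.val - 1 := by omega
    exact Prod.ext (Fin.ext this) rfl
  · simp only [] at h1 h2 h3
    subst h2; subst h3
    exfalso
    omega

lemma chain_nonadj_cross {n : ℕ} {i i' : Fin n} {j j' : Fin 5} (hii : i ≠ i')
    (hj0 : j ≠ 0) (hj4 : j ≠ 4) : ¬ (chainGadgetGraph n).Adj (i, j) (i', j') := by
  rintro (⟨h1, _⟩ | ⟨_, h2, _⟩ | ⟨_, h2, _⟩)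
  · exact hii h1
  · exact hj4 h2
  · exact hj0 h2

lemma chain_nonadj_same {n : ℕ} (i : Fin n) {j j' : Fin 5}
    (h : s(j, j') ∉ gadgetEdges) : ¬ (chainGadgetGraph n).Adj (i, j) (i, j') := by
  rintro (⟨_, h2⟩ | ⟨h1, _, _⟩ | ⟨h1, _, _⟩)
  · exact h h2
  · simp only [] at h1; omega
  · simp only [] at h1; omega

lemma alpha_lb {n : ℕ} {W : Type} (H : SimpleGraph W) (L : Fin n × Fin 5 → Finset W)
    (cov : DPCover (chainGadgetGraph n) H L) (hL : ∀ v, (L v).card = 2) :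
    ∃ S : Finset W, IsIndepFinset H S ∧ S.card = 3 * n := by
  classical
  have hx : ∀ i : Fin n, ∃ a b c : W, a ∈ L (i, 2) ∧ b ∈ L (i, 1) ∧ c ∈ L (i, 3) ∧
      ¬H.Adj a b ∧ ¬H.Adj b c := by
    intro i
    obtain ⟨a, ha⟩ := Finset.card_pos.mp
      (show 0 < (L (i, 2)).card by rw [hL]; omega)
    have adj21 : (chainGadgetGraph n).Adj (i, 2) (i, 1) :=
      Or.inl ⟨rfl, (by decide : s((2 : Fin 5), (1 : Fin 5)) ∈ gadgetEdges)⟩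
    obtain ⟨b, hb, hab⟩ := exists_nonadj cov adj21 ha (le_of_eq (hL _).symm)
    have adj13 : (chainGadgetGraph n).Adj (i, 1) (i, 3) :=
      Or.inl ⟨rfl, (by decide : s((1 : Fin 5), (3 : Fin 5)) ∈ gadgetEdges)⟩
    obtain ⟨c, hc, hbc⟩ := exists_nonadj cov adj13 hb (le_of_eq (hL _).symm)
    exact ⟨a, b, c, ha, hb, hc, hab, hbc⟩
  choose a b c ha hb hc hab hbc using hx
  have mem3 : ∀ i : Fin n, ∀ w ∈ ({a i, b i, c i} : Finset W),
      ∃ j : Fin 5, j ≠ 0 ∧ j ≠ 4 ∧ w ∈ L (i, j) := by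
    intro i w hw
    simp only [Finset.mem_insert, Finset.mem_singleton] at hw
    rcases hw with rfl | rfl | rfl
    · exact ⟨2, by decide, by decide, ha i⟩
    · exact ⟨1, by decide, by decide, hb i⟩
    · exact ⟨3, by decide, by decide, hc i⟩
  refine ⟨Finset.univ.biUnion (fun i => {a i, b i, c i}), ?_, ?_⟩
  · intro w hw w' hw' hadj
    obtain ⟨i, _, hwi⟩ := Finset.mem_biUnion.mp hw
    obtain ⟨i', _, hwi'⟩ := Finset.mem_biUnion.mp hw'
    by_cases hii : i = i'
    · subst hii
      simp only [Finset.mem_insert, Finset.mem_singleton] at hwi hwi'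
      have nadj23 : ¬ (chainGadgetGraph n).Adj (i, 2) (i, 3) :=
        chain_nonadj_same i (by decide)
      have ne23 : ((i, 2) : Fin n × Fin 5) ≠ (i, 3) := by
        intro h
        exact absurd (congrArg Prod.snd h) ((by decide : ¬ (2 : Fin 5) = 3))
      rcases hwi with rfl | rfl | rfl <;> rcases hwi' with rfl | rfl | rfl
      · exact H.loopless.irrefl _ hadj
      · exact hab i hadj
      · exact cov.nonadj ne23 nadj23 _ (ha i) _ (hc i) hadj
      · exact hab i hadj.symm
      · exact H.loopless.irrefl _ hadj
      · exact hbc i hadj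
      · exact cov.nonadj ne23 nadj23 _ (ha i) _ (hc i) hadj.symm
      · exact hbc i hadj.symm
      · exact H.loopless.irrefl _ hadj
    · obtain ⟨j, hj0, hj4, hm⟩ := mem3 i w hwi
      obtain ⟨j', _, _, hm'⟩ := mem3 i' w' hwi'
      have hne : ((i, j) : Fin n × Fin 5) ≠ (i', j') := by
        intro h; exact hii (congrArg Prod.fst h)
      exact cov.nonadj hne (chain_nonadj_cross hii hj0 hj4) _ hm _ hm' hadj
  · rw [Finset.card_biUnion]
    · have hcard3 : ∀ i : Fin n, ({a i, b i, c i} : Finset W).card = 3 := by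
        intro i
        have hne1 : a i ≠ b i := by
          intro h
          have := mem_L_unique cov (ha i) (h ▸ hb i)
          exact absurd (congrArg Prod.snd this) ((by decide : ¬ (2 : Fin 5) = 1))
        have hne2 : a i ≠ c i := by
          intro h
          have := mem_L_unique cov (ha i) (h ▸ hc i)
          exact absurd (congrArg Prod.snd this) ((by decide : ¬ (2 : Fin 5) = 3))
        have hne3 : b i ≠ c i := by
          intro h
          have := mem_L_unique cov (hb i) (h ▸ hc i)
          exact absurd (congrArg Prod.snd this) ((by decide : ¬ (1 : Fin 5) = 3))
        rw [Finset.card_insert_of_notMem (by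
            simp only [Finset.mem_insert, Finset.mem_singleton]; push_neg
            exact ⟨hne1, hne2⟩),
          Finset.card_insert_of_notMem (by simpa using hne3),
          Finset.card_singleton]
      calc (∑ i : Fin n, ({a i, b i, c i} : Finset W).card)
          = ∑ _i : Fin n, 3 := Finset.sum_congr rfl (fun i _ => hcard3 i)
        _ = 3 * n := by simp [mul_comm]
    · intro i _ i' _ hii
      simp only [Finset.disjoint_left]
      intro w hwi hwi'
      obtain ⟨j, _, _, hm⟩ := mem3 i w hwi
      obtain ⟨j', _, _, hm'⟩ := mem3 i' w hwi'
      exact hii (congrArg Prod.fst (mem_L_unique cov hm hm'))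

end Lemmas

/-- For every `n ≥ 1`, the graph `G*` on `5n` vertices satisfies `χ_DP(G*) = 3` and
`α₂^{DP}(G*) = 3n < 10n/3 = 2|V(G*)|/χ_DP(G*)`; in particular `G*` is not partially
DP-nice. -/
theorem chainGadgetGraph_not_partiallyDPNice (n : ℕ) (hn : 1 ≤ n) :
    chiDP (chainGadgetGraph n) = 3 ∧ alphaDP (chainGadgetGraph n) 2 = 3 * n ∧
      ¬ PartiallyDPNice (chainGadgetGraph n) := by
  have hcardV : Fintype.card (Fin n × Fin 5) = 5 * n := by
    rw [Fintype.card_prod, Fintype.card_fin, Fintype.card_fin]; ring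
  -- χ_DP = 3
  have h3mem : 3 ∈ {m : ℕ | ∀ (W : Type) (_ : Fintype W) (H : SimpleGraph W)
      (L : Fin n × Fin 5 → Finset W), DPCover (chainGadgetGraph n) H L →
      (∀ v, (L v).card = m) → ∃ S : Finset W, IsIndepFinset H S ∧
      S.card = Fintype.card (Fin n × Fin 5)} := by
    intro W _ H L cov hL
    exact greedy cov hL cidx cidx_inj chain_hdeg
  have hlb : ∀ m ∈ {m : ℕ | ∀ (W : Type) (_ : Fintype W) (H : SimpleGraph W)
      (L : Fin n × Fin 5 → Finset W), DPCover (chainGadgetGraph n) H L →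
      (∀ v, (L v).card = m) → ∃ S : Finset W, IsIndepFinset H S ∧
      S.card = Fintype.card (Fin n × Fin 5)}, 3 ≤ m := by
    intro m hm
    set i0 : Fin n := ⟨0, hn⟩
    have h01 : (chainGadgetGraph n).Adj (i0, 0) (i0, 1) :=
      Or.inl ⟨rfl, (by decide : s((0 : Fin 5), (1 : Fin 5)) ∈ gadgetEdges)⟩
    have h02 : (chainGadgetGraph n).Adj (i0, 0) (i0, 2) :=
      Or.inl ⟨rfl, (by decide : s((0 : Fin 5), (2 : Fin 5)) ∈ gadgetEdges)⟩
    have h12 : (chainGadgetGraph n).Adj (i0, 1) (i0, 2) :=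
      Or.inl ⟨rfl, (by decide : s((1 : Fin 5), (2 : Fin 5)) ∈ gadgetEdges)⟩
    exact triangle_lb (chainGadgetGraph n) m h01 h02 h12
      (hm _ inferInstance (canonH _ m) (canonL _ m) (canon_cover _ m)
        (canonL_card _ m))
  have hchi : chiDP (chainGadgetGraph n) = 3 :=
    le_antisymm (Nat.sInf_le h3mem) (le_csInf ⟨3, h3mem⟩ hlb)
  -- α₂ = 3n
  have hmemα : 3 * n ∈ {N : ℕ | ∃ (W : Type) (_ : Fintype W) (H : SimpleGraph W)
      (L : Fin n × Fin 5 → Finset W), DPCover (chainGadgetGraph n) H L ∧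
      (∀ v, (L v).card = 2) ∧ _root_.indepNum H = N} :=
    ⟨Fin n × (Fin 5 × Fin 2), inferInstance, exH n, exL n, ex_cover n,
      exL_card, exH_indepNum n⟩
  have hlbα : ∀ N ∈ {N : ℕ | ∃ (W : Type) (_ : Fintype W) (H : SimpleGraph W)
      (L : Fin n × Fin 5 → Finset W), DPCover (chainGadgetGraph n) H L ∧
      (∀ v, (L v).card = 2) ∧ _root_.indepNum H = N}, 3 * n ≤ N := by
    rintro N ⟨W, fW, H, L, cov, hc, rfl⟩
    exact @indepNum_ge W fW H _ (alpha_lb H L cov hc)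
  have halpha : alphaDP (chainGadgetGraph n) 2 = 3 * n :=
    le_antisymm (Nat.sInf_le hmemα) (le_csInf ⟨3 * n, hmemα⟩ hlbα)
  refine ⟨hchi, halpha, ?_⟩
  intro hnice
  have h2 := hnice 2 (by norm_num) (by rw [hchi]; norm_num)
  rw [hchi, halpha, hcardV] at h2
  have hq : (1 : ℚ) ≤ (n : ℚ) := by exact_mod_cast hn
  rw [div_le_iff₀ (by norm_num : (0 : ℚ) < ((3 : ℕ) : ℚ))] at h2
  push_cast at h2
  linarith
end

section
/- For any finite simple graph G, α₂^{DP}(G) ≥ |V(G)| − τ(G), where τ(G) is the feedback vertex number of G, i.e., the minimum size of a set S ⊆ V(G) such that the induced subgraph G − S is acyclic. -/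
open SimpleGraph Walk Finset
open scoped Classical

/-- The feedback vertex number `τ(G)`: the minimum size of a set `S` of vertices such
that the induced subgraph `G − S` is acyclic. -/
noncomputable def feedbackVertexNumber {V : Type} [Fintype V] (G : SimpleGraph V) : ℕ :=
  sInf {k : ℕ | ∃ S : Finset V, S.card = k ∧ (G.induce {v : V | v ∉ S}).IsAcyclic}

private lemma incident_unique {V : Type} {G : SimpleGraph V} {v u a b : V}
    (p : G.Walk v u) (hp : p.IsPath) (ha : s(v,a) ∈ p.edges) (hb : s(v,b) ∈ p.edges) :
    a = b := by
  cases p with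
  | nil => simp at ha
  | @cons _ x _ h q =>
    rw [Walk.cons_isPath_iff] at hp
    rw [Walk.edges_cons, List.mem_cons] at ha hb
    have key : ∀ c : V, s(v,c) = s(v,x) ∨ s(v,c) ∈ q.edges → c = x := by
      intro c hc
      rcases hc with hc | hc
      · rcases Sym2.eq_iff.mp hc with ⟨-, rfl⟩ | ⟨rfl, rfl⟩
        · rfl
        · exact absurd rfl h.ne
      · exact absurd (Walk.fst_mem_support_of_mem_edges q hc) hp.2
    rw [key a ha, key b hb]

private lemma exists_deg_le_one {V' : Type} [Fintype V'] {G' : SimpleGraph V'}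
    (hac : G'.IsAcyclic) (A : Finset V') (hne : A.Nonempty) :
    ∃ v ∈ A, (A.filter (fun u => G'.Adj v u)).card ≤ 1 := by
  classical
  by_contra hcon
  push_neg at hcon
  set Pset : Set ℕ := {n | ∃ (u v : V') (p : G'.Walk u v), p.IsPath ∧
    (∀ x ∈ p.support, x ∈ A) ∧ p.length = n} with hPdef
  have hPne : Pset.Nonempty := by
    obtain ⟨a, ha⟩ := hne
    exact ⟨0, a, a, Walk.nil, Walk.IsPath.nil, by simp [ha], rfl⟩
  have hbdd : BddAbove Pset := by
    refine ⟨Fintype.card V', ?_⟩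
    rintro n ⟨u, v, p, hp, -, rfl⟩
    exact hp.length_lt.le
  obtain ⟨u, v, p, hp, hsup, hlen⟩ := Nat.sSup_mem hPne hbdd
  have hvA : A ⊆ A := le_refl _
  have hvmem : v ∈ A := hsup v p.end_mem_support
  -- every A-neighbor of v is on p
  have hnb : ∀ w, G'.Adj v w → w ∈ A → w ∈ p.support := by
    intro w hadj hwA
    by_contra hws
    have hp' : (p.concat hadj).IsPath := by
      rw [← Walk.isPath_reverse_iff, Walk.reverse_concat]
      exact (Walk.cons_isPath_iff _ _).2 ⟨hp.reverse,
        by simpa [Walk.support_reverse] using hws⟩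
    have hmem : p.length + 1 ∈ Pset := by
      refine ⟨u, w, p.concat hadj, hp', ?_, by rw [Walk.length_concat]⟩
      intro x hx
      rw [Walk.support_concat] at hx
      have hx' : x ∈ p.support ∨ x = w := by
        simpa [List.concat_eq_append] using hx
      rcases hx' with hx' | rfl
      · exact hsup x hx'
      · exact hwA
    have := le_csSup hbdd hmem
    omega
  have hedge : ∀ w, G'.Adj v w → w ∈ A → s(v, w) ∈ p.edges := by
    intro w hadj hwA
    have hws := hnb w hadj hwA
    by_contra hne'
    have hq : (p.dropUntil w hws).IsPath := hp.dropUntil hws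
    have hcyc : (Walk.cons hadj (p.dropUntil w hws)).IsCycle :=
      Path.cons_isCycle ⟨p.dropUntil w hws, hq⟩ hadj
        (fun hmm => hne' (Walk.edges_dropUntil_subset p hws hmm))
    exact hac _ hcyc
  obtain ⟨n1, hn1, n2, hn2, hn12⟩ := Finset.one_lt_card.mp (hcon v hvmem)
  rw [Finset.mem_filter] at hn1 hn2
  have h1 : s(v, n1) ∈ p.reverse.edges := by
    rw [Walk.edges_reverse, List.mem_reverse]; exact hedge n1 hn1.2 hn1.1
  have h2 : s(v, n2) ∈ p.reverse.edges := by
    rw [Walk.edges_reverse, List.mem_reverse]; exact hedge n2 hn2.2 hn2.1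
  exact hn12 (incident_unique p.reverse hp.reverse h1 h2)

private lemma key_choice {V W : Type} [Fintype V] {G : SimpleGraph V}
    {H : SimpleGraph W} {L : V → Finset W} (C : DPCover G H L)
    (h2 : ∀ v, (L v).card = 2) {S : Finset V}
    (hac : (G.induce {v : V | v ∉ S}).IsAcyclic) :
    ∀ (n : ℕ) (A : Finset V), A.card = n → A ⊆ Sᶜ →
      ∃ f : V → W, (∀ v ∈ A, f v ∈ L v) ∧
        ∀ u ∈ A, ∀ x ∈ A, u ≠ x → ¬ H.Adj (f u) (f x) := by
  have hLne : ∀ v, (L v).Nonempty := fun v => Finset.card_pos.mp (by rw [h2 v]; omega)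
  intro n
  induction n using Nat.strong_induction_on with
  | _ n ih =>
  intro A hcard hAS
  rcases A.eq_empty_or_nonempty with rfl | hne
  · exact ⟨fun v => (hLne v).choose, by simp, by simp⟩
  · set T : Set V := {v : V | v ∉ S} with hT
    let A' : Finset ↥T := A.subtype (fun x => x ∈ T)
    have hmemT : ∀ {a : V}, a ∈ A → a ∈ T := by
      intro a ha
      have := hAS ha
      simpa [hT] using this
    obtain ⟨a, ha⟩ := hne
    have hA'ne : A'.Nonempty := ⟨⟨a, hmemT ha⟩, Finset.mem_subtype.mpr ha⟩
    obtain ⟨v', hv'A, hv'deg⟩ := exists_deg_le_one hac A' hA'ne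
    set v := v'.1 with hvdef
    have hvA : v ∈ A := Finset.mem_subtype.mp hv'A
    have himg : A.filter (fun u => G.Adj v u)
        = (A'.filter (fun u => (G.induce T).Adj v' u)).image Subtype.val := by
      ext u
      simp only [Finset.mem_image, Finset.mem_filter, Finset.mem_subtype, comap_adj,
        Function.Embedding.coe_subtype]
      constructor
      · rintro ⟨huA, hadj⟩
        exact ⟨⟨u, hmemT huA⟩, ⟨Finset.mem_subtype.mpr huA, hadj⟩, rfl⟩
      · rintro ⟨u', ⟨hu'A, hadj⟩, rfl⟩
        exact ⟨Finset.mem_subtype.mp hu'A, hadj⟩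
    have hdeg : (A.filter (fun u => G.Adj v u)).card ≤ 1 := by
      rw [himg, Finset.card_image_of_injective _ Subtype.val_injective]
      exact hv'deg
    -- apply IH to A.erase v
    obtain ⟨f, hfL, hfI⟩ := ih (A.erase v).card (by rw [← hcard]; exact Finset.card_erase_lt_of_mem hvA)
      (A.erase v) rfl (fun x hx => hAS (Finset.mem_of_mem_erase hx))
    -- choose w ∈ L v avoiding conflicts
    have hwex : ∃ w ∈ L v, ∀ u ∈ A.erase v, G.Adj v u → ¬ H.Adj (f u) w := by
      by_cases hex : ∃ u ∈ A.erase v, G.Adj v u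
      · obtain ⟨u0, hu0A, hu0adj⟩ := hex
        obtain ⟨w1, w2, hw12, hLv⟩ := Finset.card_eq_two.mp (h2 v)
        have hw1 : w1 ∈ L v := by rw [hLv]; simp
        have hw2 : w2 ∈ L v := by rw [hLv]; simp
        have hfu0 : f u0 ∈ L u0 := hfL u0 hu0A
        have huniq : ∀ u ∈ A.erase v, G.Adj v u → u = u0 := by
          intro u huA huadj
          have h1 : u ∈ A.filter (fun u => G.Adj v u) :=
            Finset.mem_filter.mpr ⟨Finset.mem_of_mem_erase huA, huadj⟩
          have h2' : u0 ∈ A.filter (fun u => G.Adj v u) :=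
            Finset.mem_filter.mpr ⟨Finset.mem_of_mem_erase hu0A, hu0adj⟩
          exact Finset.card_le_one.mp hdeg u h1 u0 h2'
        by_cases hc1 : H.Adj (f u0) w1
        · refine ⟨w2, hw2, fun u huA huadj hadj => ?_⟩
          rw [huniq u huA huadj] at hadj
          exact hw12 (C.matching hu0adj.symm (f u0) hfu0 w1 hw1 w2 hw2 hc1 hadj)
        · refine ⟨w1, hw1, fun u huA huadj hadj => ?_⟩
          rw [huniq u huA huadj] at hadj
          exact hc1 hadj
      · push_neg at hex
        obtain ⟨w, hw⟩ := hLne v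
        exact ⟨w, hw, fun u huA huadj => absurd huadj (hex u huA)⟩
    obtain ⟨w, hwL, hw⟩ := hwex
    refine ⟨Function.update f v w, ?_, ?_⟩
    · intro x hxA
      rcases eq_or_ne x v with rfl | hxv
      · simpa using hwL
      · rw [Function.update_of_ne hxv]
        exact hfL x (Finset.mem_erase.mpr ⟨hxv, hxA⟩)
    · intro x hxA y hyA hxy
      have main : ∀ z ∈ A.erase v, ¬ H.Adj w (f z) := by
        intro z hz hadj
        by_cases hgz : G.Adj v z
        · exact hw z hz hgz hadj.symm
        · have hzv : v ≠ z := (Finset.mem_erase.mp hz).1.symm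
          exact C.nonadj hzv hgz w hwL (f z) (hfL z hz) hadj
      rcases eq_or_ne x v with rfl | hxv
      · rw [Function.update_self, Function.update_of_ne (Ne.symm hxy)]
        exact main y (Finset.mem_erase.mpr ⟨Ne.symm hxy, hyA⟩)
      · rcases eq_or_ne y v with rfl | hyv
        · rw [Function.update_self, Function.update_of_ne hxv]
          intro hadj
          exact main x (Finset.mem_erase.mpr ⟨hxv, hxA⟩) hadj.symm
        · rw [Function.update_of_ne hxv, Function.update_of_ne hyv]
          exact hfI x (Finset.mem_erase.mpr ⟨hxv, hxA⟩) y (Finset.mem_erase.mpr ⟨hyv, hyA⟩) hxy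

/-- For any graph `G`, `α₂^{DP}(G) ≥ |V(G)| − τ(G)`. -/
theorem alphaDP_two_ge_card_sub_fvn {V : Type} [Fintype V] (G : SimpleGraph V) :
    Fintype.card V - feedbackVertexNumber G ≤ alphaDP G 2 := by
  classical
  cases isEmpty_or_nonempty V with
  | inl h =>
    haveI := h
    rw [Fintype.card_eq_zero]
    omega
  | inr hV =>
  have hfvnne : {k : ℕ | ∃ S : Finset V, S.card = k ∧
      (G.induce {v : V | v ∉ S}).IsAcyclic}.Nonempty := by
    refine ⟨Finset.univ.card, Finset.univ, rfl, ?_⟩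
    have : IsEmpty ↥{v : V | v ∉ (Finset.univ : Finset V)} :=
      ⟨fun ⟨v, hv⟩ => hv (Finset.mem_univ v)⟩
    exact fun v _ => (this.false v).elim
  obtain ⟨S, hScard, hSac⟩ := Nat.sInf_mem hfvnne
  have hαne : {n : ℕ | ∃ (W : Type) (_ : Fintype W) (H : SimpleGraph W) (L : V → Finset W),
      DPCover G H L ∧ (∀ v, (L v).card = 2) ∧ _root_.indepNum H = n}.Nonempty := by
    let H₀ : SimpleGraph (V × Fin 2) :=
      { Adj := fun a b => a.1 = b.1 ∧ a ≠ b
        symm := ⟨fun a b h => ⟨h.1.symm, h.2.symm⟩⟩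
        loopless := ⟨fun a h => h.2 rfl⟩ }
    have hH₀ : ∀ a b : V × Fin 2, H₀.Adj a b ↔ a.1 = b.1 ∧ a ≠ b := fun a b => Iff.rfl
    let L₀ : V → Finset (V × Fin 2) := fun v => {(v, 0), (v, 1)}
    have hmem : ∀ (w : V × Fin 2) (v : V), w ∈ L₀ v ↔ w.1 = v := by
      rintro ⟨a, b⟩ v
      fin_cases b <;> simp [L₀, Prod.ext_iff]
    have cover : DPCover G H₀ L₀ := by
      constructor
      · exact fun w => ⟨w.1, (hmem w w.1).mpr rfl, fun y hy => ((hmem w y).mp hy).symm⟩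
      · exact fun v a ha b hb hne => ⟨((hmem a v).mp ha).trans ((hmem b v).mp hb).symm, hne⟩
      · intro u v huv a ha b hb b' hb' h1 _
        exact absurd (((hmem a u).mp ha).symm.trans (h1.1.trans ((hmem b v).mp hb))) huv.ne
      · intro u v hne _ a ha b hb h
        exact hne (((hmem a u).mp ha).symm.trans (h.1.trans ((hmem b v).mp hb)))
    have hc2 : ∀ v, (L₀ v).card = 2 :=
      fun v => Finset.card_pair (by simp [Prod.ext_iff])
    exact ⟨_root_.indepNum H₀, V × Fin 2, inferInstance, H₀, L₀, cover, hc2, rfl⟩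
  obtain ⟨W, instW, H, L, C, h2, hn⟩ := Nat.sInf_mem hαne
  letI := instW
  obtain ⟨f, hfL, hfI⟩ := key_choice C h2 hSac Sᶜ.card Sᶜ rfl (le_refl _)
  have hinj : Set.InjOn f ↑Sᶜ := fun x hx y hy hxy =>
    (C.partition (f x)).unique (hfL x hx) (hxy ▸ hfL y hy)
  have hTcard : (Sᶜ.image f).card = Sᶜ.card := Finset.card_image_of_injOn hinj
  have hTindep : IsIndepFinset H (Sᶜ.image f) := by
    intro a ha b hb hadj
    obtain ⟨x, hx, rfl⟩ := Finset.mem_image.mp ha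
    obtain ⟨y, hy, rfl⟩ := Finset.mem_image.mp hb
    rcases eq_or_ne x y with rfl | hne
    · exact H.irrefl hadj
    · exact hfI x hx y hy hne hadj
  have hle : (Sᶜ.image f).card ≤ _root_.indepNum H := by
    apply le_csSup
    · refine ⟨Fintype.card W, ?_⟩
      rintro m ⟨T, -, rfl⟩
      exact Finset.card_le_univ T
    · exact ⟨Sᶜ.image f, hTindep, rfl⟩
  have hfvn : feedbackVertexNumber G = S.card := hScard.symm
  have hα : alphaDP G 2 = _root_.indepNum H := hn.symm
  rw [hα]
  calc Fintype.card V - feedbackVertexNumber G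
      = Fintype.card V - S.card := by rw [hfvn]
    _ = Sᶜ.card := (Finset.card_compl S).symm
    _ = (Sᶜ.image f).card := hTcard.symm
    _ ≤ _root_.indepNum H := hle
end
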